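/- If A and B are closed subsets of a topological space T such that the subspaces A and B are each Hausdorff, then the subspace A ∪ B is Hausdorff. -/

import Mathlib

lemma diagSet_closed {T : Type*} [TopologicalSpace T] (s : Set T)
    (hs : IsClosed s) (hsT2 : T2Space ↥s) :
    IsClosed (Set.range (fun x : ↥s => ((x : T), (x : T)))) := by
  have h : Set.range (fun x : ↥s => ((x : T), (x : T)))
      = Prod.map (Subtype.val) (Subtype.val) '' (Set.diagonal ↥s) := by
    ext p
    constructor
    · rintro ⟨x, rfl⟩
      exact ⟨(x, x), rfl, rfl⟩
    · rintro ⟨⟨x, y⟩, hxy, rfl⟩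
      cases hxy
      exact ⟨x, rfl⟩
  rw [h]
  have hemb : Topology.IsClosedEmbedding
      (Prod.map (Subtype.val : ↥s → T) (Subtype.val : ↥s → T)) := by
    refine ⟨Topology.IsEmbedding.prodMap Topology.IsEmbedding.subtypeVal
      Topology.IsEmbedding.subtypeVal, ?_⟩
    rw [Set.range_prodMap, Subtype.range_coe]
    exact hs.prod hs
  exact hemb.isClosedMap _ isClosed_diagonal

/-- The union of two closed Hausdorff subspaces of a topological space is Hausdorff. -/
theorem stmt8 {T : Type*} [TopologicalSpace T] (A B : Set T)
    (hA : IsClosed A) (hB : IsClosed B)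
    (hAT2 : T2Space ↥A) (hBT2 : T2Space ↥B) :
    T2Space ↥(A ∪ B) := by
  rw [t2_iff_isClosed_diagonal]
  have key : Set.diagonal ↥(A ∪ B)
      = Prod.map (Subtype.val) (Subtype.val) ⁻¹'
        (Set.range (fun x : ↥A => ((x : T), (x : T))) ∪
         Set.range (fun x : ↥B => ((x : T), (x : T)))) := by
    ext ⟨x, y⟩
    simp only [Set.mem_diagonal_iff, Set.mem_preimage, Set.mem_union, Set.mem_range, Prod.map,
      Prod.mk.injEq]
    constructor
    · rintro rfl
      rcases x.2 with hx | hx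
      · exact Or.inl ⟨⟨x, hx⟩, rfl, rfl⟩
      · exact Or.inr ⟨⟨x, hx⟩, rfl, rfl⟩
    · rintro (⟨a, h1, h2⟩ | ⟨a, h1, h2⟩) <;> exact Subtype.ext (h1.symm.trans h2)
  rw [key]
  exact ((diagSet_closed A hA hAT2).union (diagSet_closed B hB hBT2)).preimage
    (continuous_subtype_val.prodMap continuous_subtype_val)
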